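/- Let G be a topological group such that for every identity neighborhood U there exists α : G → Sym(G) with α(g)(h) ∈ U g h for all g, h ∈ G and with the subgroup generated by the image of α finite. Then G is precompact. -/

import Mathlib

/-- A topological group is precompact if every identity neighborhood `U` satisfies `UF = G`
for some finite `F ⊆ G`. -/
def PrecompactGroup (G : Type*) [Group G] [TopologicalSpace G] : Prop :=
  ∀ U ∈ nhds (1 : G), ∃ F : Finset G, ∀ x : G, ∃ u ∈ U, ∃ y ∈ F, x = u * y

/-- If for every identity neighborhood `U` there is `α : G → Sym(G)` with `α(g)(h) ∈ Ugh`
for all `g, h` whose image generates a finite subgroup, then `G` is precompact. -/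
theorem stmt_16 (G : Type*) [Group G] [TopologicalSpace G] [IsTopologicalGroup G]
    (h : ∀ U ∈ nhds (1 : G), ∃ α : G → Equiv.Perm G,
      (∀ g h : G, α g h * (g * h)⁻¹ ∈ U) ∧
      Set.Finite ((Subgroup.closure (Set.range α) : Subgroup (Equiv.Perm G)) : Set (Equiv.Perm G))) :
    PrecompactGroup G := by
  intro U hU
  have hUinv : U⁻¹ ∈ nhds (1 : G) := by
    have := inv_mem_nhds_one G hU
    simpa using this
  obtain ⟨α, hα, hfin⟩ := h (U ∩ U⁻¹) (Filter.inter_mem hU hUinv)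
  classical
  refine ⟨hfin.toFinset.image (fun σ => σ 1), fun x => ?_⟩
  have hx := hα x 1
  rw [mul_one] at hx
  refine ⟨(α x 1 * x⁻¹)⁻¹, ?_, α x 1, ?_, by group⟩
  · have : α x 1 * x⁻¹ ∈ U⁻¹ := hx.2
    simpa [Set.mem_inv] using this
  · refine Finset.mem_image.2 ⟨α x, ?_, rfl⟩
    exact hfin.mem_toFinset.2 (Subgroup.subset_closure (Set.mem_range_self x))
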